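/- Let R(α,ζ,Δ) be the algebra defined in the context. Then, with respect to the decomposition R(α,ζ,Δ) = ⟨e⟩ ⊕ Z ⊕ R and the pairing Δ, the full automorphism group of R(α,ζ,Δ) is Aut(R(α,ζ,Δ)) = { id_{⟨e⟩} ⊕ (g*)^{-1} ⊕ g : g ∈ Aut(R) }, where for g ∈ GL(R) the conjugate g* ∈ GL(Z) is defined by Δ(g*(z), a) = Δ(z, g(a)) for all z ∈ Z, a ∈ R. -/

import Mathlib

/-- **Proposition 7** (Gordeev–Popov): with `P = R(α,ζ,Δ) = ⟨e⟩ ⊕ Z ⊕ R` the algebra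
defined as in the context (|F| ≥ 4, `e` a left identity, `Z`, `R` eigenspaces of right
multiplication by `e` with nonzero eigenvalues `ζ ≠ α`, both ≠ 1, `R` a subalgebra, `Z` a
subalgebra with zero multiplication, `a·z = 0`, `z·a = Δ(z,a)·e`), the automorphisms of
`P` are exactly the maps `id_{⟨e⟩} ⊕ (g*)⁻¹ ⊕ g` with `g ∈ Aut(R)`, where
`g* ∈ GL(Z)` is the conjugate of `g` with respect to the nondegenerate pairing `Δ`
(`h = (g*)⁻¹` being characterized by `Δ(h z, g a) = Δ(z, a)` for all `z, a`). -/
theorem stmt9 {F R Z P : Type*} [Field F]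
    [AddCommGroup R] [Module F R] [FiniteDimensional F R] [Nontrivial R]
    [AddCommGroup Z] [Module F Z] [FiniteDimensional F Z]
    [AddCommGroup P] [Module F P]
    (hF : (4 : Cardinal) ≤ Cardinal.mk F)
    (hdim : Module.finrank F Z = Module.finrank F R)
    (mR : R →ₗ[F] R →ₗ[F] R)
    (α ζ : F) (hα0 : α ≠ 0) (hζ0 : ζ ≠ 0) (hα1 : α ≠ 1) (hζ1 : ζ ≠ 1) (hαζ : α ≠ ζ)
    (Δ : Z →ₗ[F] R →ₗ[F] F) (hΔ : Δ.Nondegenerate)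
    (mul : P →ₗ[F] P →ₗ[F] P) (e : P)
    (jZ : Z →ₗ[F] P) (hjZ : Function.Injective jZ)
    (jR : R →ₗ[F] P) (hjR : Function.Injective jR)
    (hinternal : DirectSum.IsInternal
      ![Submodule.span F {e}, LinearMap.range jZ, LinearMap.range jR])
    (hleft : ∀ x : P, mul e x = x)
    (hZe : ∀ z : Z, mul (jZ z) e = ζ • jZ z)
    (hRe : ∀ a : R, mul (jR a) e = α • jR a)
    (hRR : ∀ a b : R, mul (jR a) (jR b) = jR (mR a b))
    (hZZ : ∀ z w : Z, mul (jZ z) (jZ w) = 0)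
    (hRZ : ∀ (a : R) (z : Z), mul (jR a) (jZ z) = 0)
    (hZR : ∀ (z : Z) (a : R), mul (jZ z) (jR a) = Δ z a • e) :
    ∀ σ : P ≃ₗ[F] P,
      (∀ x y : P, σ (mul x y) = mul (σ x) (σ y)) ↔
        ∃ (g : R ≃ₗ[F] R) (h : Z ≃ₗ[F] Z),
          (∀ a b : R, g (mR a b) = mR (g a) (g b)) ∧
          (∀ (z : Z) (a : R), Δ (h z) (g a) = Δ z a) ∧
          σ e = e ∧ (∀ z : Z, σ (jZ z) = jZ (h z)) ∧ (∀ a : R, σ (jR a) = jR (g a)) := by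

  -- `e` is nonzero
  have hPnt : Nontrivial P := by
    obtain ⟨a, b, hab⟩ := exists_pair_ne R
    exact ⟨jR a, jR b, fun hh => hab (hjR hh)⟩
  have he0 : e ≠ 0 := by
    intro h
    obtain ⟨x, y, hxy⟩ := exists_pair_ne P
    apply hxy
    have hx := hleft x; have hy := hleft y
    rw [h] at hx hy
    simp only [map_zero, LinearMap.zero_apply] at hx hy
    rw [← hx, ← hy]
  have hmulee : mul e e = e := hleft e
  -- decomposition of `P`
  have hdecomp : ∀ x : P, ∃ (c : F) (z : Z) (a : R), x = c • e + jZ z + jR a := by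
    intro x
    have htop := hinternal.submodule_iSup_eq_top
    have hx : x ∈ ⨆ i, ![Submodule.span F {e}, LinearMap.range jZ, LinearMap.range jR] i := by
      rw [htop]; trivial
    refine Submodule.iSup_induction (motive := fun y => ∃ (c : F) (z : Z) (a : R),
      y = c • e + jZ z + jR a) _ hx ?_ ⟨0, 0, 0, by simp⟩ ?_
    · intro i y hy
      fin_cases i
      · obtain ⟨c, hc⟩ := Submodule.mem_span_singleton.mp hy
        exact ⟨c, 0, 0, by simp [← hc]⟩
      · obtain ⟨z, hz⟩ := hy
        exact ⟨0, z, 0, by simp [← hz]⟩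
      · obtain ⟨a, ha⟩ := hy
        exact ⟨0, 0, a, by simp [← ha]⟩
    · rintro y y' ⟨c, z, a, hy⟩ ⟨c', z', a', hy'⟩
      exact ⟨c + c', z + z', a + a', by rw [hy, hy', add_smul, map_add, map_add]; abel⟩
  -- right multiplication by `e` on a decomposed element
  have Te : ∀ (c : F) (z : Z) (a : R),
      mul (c • e + jZ z + jR a) e = c • e + ζ • jZ z + α • jR a := by
    intro c z a
    simp only [map_add, map_smul, LinearMap.add_apply, LinearMap.smul_apply, hZe, hRe, hmulee]
  -- uniqueness of the decomposition, proved via a Vandermonde-style argument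
  have huniq : ∀ (c : F) (z : Z) (a : R),
      c • e + jZ z + jR a = 0 → c = 0 ∧ z = 0 ∧ a = 0 := by
    intro c z a h0
    have h1 : c • e + ζ • jZ z + α • jR a = 0 := by
      rw [← Te, h0, map_zero, LinearMap.zero_apply]
    have h2 : c • e + (ζ * ζ) • jZ z + (α * α) • jR a = 0 := by
      have hh : mul (c • e + ζ • jZ z + α • jR a) e = 0 := by
        rw [h1, map_zero, LinearMap.zero_apply]
      rw [show (c • e + ζ • jZ z + α • jR a) = c • e + jZ (ζ • z) + jR (α • a) by
        rw [map_smul, map_smul], Te, map_smul, map_smul, smul_smul, smul_smul] at hh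
      exact hh
    have h3 : (ζ - 1) • jZ z + (α - 1) • jR a = 0 := by
      linear_combination (norm := module) h1 - h0
    have h4 : (ζ * ζ - 1) • jZ z + (α * α - 1) • jR a = 0 := by
      linear_combination (norm := module) h2 - h0
    have h5 : ((ζ - 1) * (α - ζ)) • jZ z = 0 := by
      linear_combination (norm := module) (α + 1) • h3 - h4
    have hzne : (ζ - 1) * (α - ζ) ≠ 0 :=
      mul_ne_zero (sub_ne_zero.mpr hζ1) (sub_ne_zero.mpr hαζ)
    have hz : z = 0 := by
      rcases smul_eq_zero.mp h5 with hc | hc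
      · exact absurd hc hzne
      · exact hjZ (by rw [hc, map_zero])
    have ha : a = 0 := by
      rw [hz, map_zero, smul_zero, zero_add] at h3
      rcases smul_eq_zero.mp h3 with hc | hc
      · exact absurd hc (sub_ne_zero.mpr hα1)
      · exact hjR (by rw [hc, map_zero])
    have hc : c = 0 := by
      rw [hz, ha, map_zero, map_zero, add_zero, add_zero] at h0
      rcases smul_eq_zero.mp h0 with hc | hc
      · exact hc
      · exact absurd hc he0
    exact ⟨hc, hz, ha⟩
  -- eigenspace characterizations
  have heigZ : ∀ x : P, mul x e = ζ • x → ∃ z, jZ z = x := by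
    intro x hx
    obtain ⟨c, z, a, rfl⟩ := hdecomp x
    rw [Te] at hx
    have h0 := huniq (c - ζ * c) 0 ((α - ζ) • a)
      (by rw [map_zero, map_smul]; linear_combination (norm := module) hx)
    have hc : c = 0 := by
      have := h0.1
      have h' : c * (1 - ζ) = 0 := by linear_combination this
      rcases mul_eq_zero.mp h' with hc | hc
      · exact hc
      · exact absurd hc (sub_ne_zero.mpr (Ne.symm hζ1))
    have ha : a = 0 := by
      rcases smul_eq_zero.mp h0.2.2 with hc' | hc'
      · exact absurd hc' (sub_ne_zero.mpr hαζ)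
      · exact hc'
    exact ⟨z, by rw [hc, ha, map_zero, zero_smul, zero_add, add_zero]⟩
  have heigR : ∀ x : P, mul x e = α • x → ∃ a, jR a = x := by
    intro x hx
    obtain ⟨c, z, a, rfl⟩ := hdecomp x
    rw [Te] at hx
    have h0 := huniq (c - α * c) ((ζ - α) • z) 0
      (by rw [map_zero, map_smul]; linear_combination (norm := module) hx)
    have hc : c = 0 := by
      have := h0.1
      have h' : c * (1 - α) = 0 := by linear_combination this
      rcases mul_eq_zero.mp h' with hc | hc
      · exact hc
      · exact absurd hc (sub_ne_zero.mpr (Ne.symm hα1))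
    have hz : z = 0 := by
      rcases smul_eq_zero.mp h0.2.1 with hc' | hc'
      · exact absurd hc' (sub_ne_zero.mpr (Ne.symm hαζ))
      · exact hc'
    exact ⟨a, by rw [hc, hz, map_zero, zero_smul, zero_add, zero_add]⟩
  intro σ
  constructor
  · intro hσ
    -- σ fixes e (left identities are unique)
    have hσe : σ e = e := by
      have hLI : ∀ x : P, mul (σ e) x = x := by
        intro x
        have h := hσ e (σ.symm x)
        rw [hleft, σ.apply_symm_apply] at h
        exact h.symm
      obtain ⟨c, z, a, hdec⟩ := hdecomp (σ e)
      have h1 : mul (σ e) e = e := hLI e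
      rw [hdec, Te] at h1
      have h2 := huniq (c - 1) (ζ • z) (α • a)
        (by rw [map_smul, map_smul]; linear_combination (norm := module) h1)
      have hc : c = 1 := by linear_combination h2.1
      have hz : z = 0 := by
        rcases smul_eq_zero.mp h2.2.1 with hc' | hc'
        · exact absurd hc' hζ0
        · exact hc'
      have ha : a = 0 := by
        rcases smul_eq_zero.mp h2.2.2 with hc' | hc'
        · exact absurd hc' hα0
        · exact hc'
      rw [hdec, hc, hz, ha, map_zero, map_zero, one_smul, add_zero, add_zero]
    -- σ preserves the Z and R eigenspaces
    have hZmap : ∀ z : Z, ∃ w : Z, jZ w = σ (jZ z) := by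
      intro z
      apply heigZ
      have h := hσ (jZ z) e
      rw [hZe, hσe, map_smul] at h
      exact h.symm
    have hRmap : ∀ a : R, ∃ b : R, jR b = σ (jR a) := by
      intro a
      apply heigR
      have h := hσ (jR a) e
      rw [hRe, hσe, map_smul] at h
      exact h.symm
    let hlin : Z →ₗ[F] Z :=
      { toFun := fun z => (hZmap z).choose
        map_add' := fun z w => hjZ (by
          rw [(hZmap (z + w)).choose_spec, map_add, map_add, map_add,
            (hZmap z).choose_spec, (hZmap w).choose_spec])
        map_smul' := fun c z => hjZ (by
          rw [(hZmap (c • z)).choose_spec, RingHom.id_apply, map_smul, map_smul, map_smul,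
            (hZmap z).choose_spec]) }
    let glin : R →ₗ[F] R :=
      { toFun := fun a => (hRmap a).choose
        map_add' := fun a b => hjR (by
          rw [(hRmap (a + b)).choose_spec, map_add, map_add, map_add,
            (hRmap a).choose_spec, (hRmap b).choose_spec])
        map_smul' := fun c a => hjR (by
          rw [(hRmap (c • a)).choose_spec, RingHom.id_apply, map_smul, map_smul, map_smul,
            (hRmap a).choose_spec]) }
    have hlinspec : ∀ z : Z, jZ (hlin z) = σ (jZ z) := fun z => (hZmap z).choose_spec
    have glinspec : ∀ a : R, jR (glin a) = σ (jR a) := fun a => (hRmap a).choose_spec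
    have hlininj : Function.Injective hlin := by
      intro z w hzw
      apply hjZ; apply σ.injective
      rw [← hlinspec, ← hlinspec, hzw]
    have glininj : Function.Injective glin := by
      intro a b hab
      apply hjR; apply σ.injective
      rw [← glinspec, ← glinspec, hab]
    refine ⟨LinearEquiv.ofBijective glin ⟨glininj, LinearMap.injective_iff_surjective.mp glininj⟩,
      LinearEquiv.ofBijective hlin ⟨hlininj, LinearMap.injective_iff_surjective.mp hlininj⟩,
      ?_, ?_, hσe, fun z => (hlinspec z).symm, fun a => (glinspec a).symm⟩
    · intro a b
      apply hjR
      show jR (glin (mR a b)) = jR (mR (glin a) (glin b))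
      rw [glinspec, ← hRR, hσ, ← glinspec, ← glinspec, hRR]
    · intro z a
      show Δ (hlin z) (glin a) = Δ z a
      have h := hσ (jZ z) (jR a)
      rw [hZR, ← hlinspec, ← glinspec, hZR, map_smul, hσe] at h
      have h' : (Δ z a - Δ (hlin z) (glin a)) • e = 0 := by
        rw [sub_smul, h, sub_self]
      rcases smul_eq_zero.mp h' with hc | hc
      · linear_combination -hc
      · exact absurd hc he0
  · rintro ⟨g, h, hg, hpair, hσe, hσZ, hσR⟩ x y
    obtain ⟨c, z, a, rfl⟩ := hdecomp x
    obtain ⟨d, w, b, rfl⟩ := hdecomp y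
    simp only [map_add, map_smul, LinearMap.add_apply, LinearMap.smul_apply,
      hleft, hZe, hRe, hRR, hZZ, hRZ, hZR, hσe, hσZ, hσR, hg, hpair,
      smul_zero, add_zero, zero_add, smul_add]
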